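/- arXiv:1905.11866 — 2 statements merged into one kernel-verified Lean document; each statement's English description precedes it below -/
import Mathlib

section
/- Let L : ℕ × ℕ → ℝ, with L(ℓ, 0) = ℓ^(-α) for some α > 0, satisfying L(ℓ + u, 0) ≤ L(ℓ, u) for all ℓ, u ∈ ℕ. Suppose u : ℕ → ℕ is such that L(ℓ, u(ℓ)) / L(ℓ, 0) → 0 as ℓ → ∞. Then u(ℓ)/ℓ → ∞, i.e., u grows superlinearly. -/
open Filter

/-- If the SL rate is `ℓ^(-α)` and unlabeled data helps (ratio of SSL to SL
minimax risks tends to 0), then `u` must grow superlinearly. -/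
theorem superlinear_unlabeled_needed
    (L : ℕ × ℕ → ℝ) (α : ℝ) (hα : 0 < α)
    (hrate : ∀ ℓ : ℕ, L (ℓ, 0) = (ℓ : ℝ) ^ (-α))
    (hdiscard : ∀ ℓ u : ℕ, L (ℓ + u, 0) ≤ L (ℓ, u))
    (u : ℕ → ℕ)
    (hhelp : Tendsto (fun ℓ => L (ℓ, u ℓ) / L (ℓ, 0)) atTop (nhds 0)) :
    Tendsto (fun ℓ => (u ℓ : ℝ) / (ℓ : ℝ)) atTop atTop := by
  rw [tendsto_atTop]
  intro C
  have hC1 : (0:ℝ) < max C 0 + 1 := by positivity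
  have hεpos : (0:ℝ) < (max C 0 + 1) ^ (-α) := Real.rpow_pos_of_pos hC1 _
  have hev := (hhelp.eventually (eventually_lt_nhds hεpos))
  filter_upwards [hev, eventually_ge_atTop 1] with ℓ hlt hℓ1
  have hℓpos : (0:ℝ) < (ℓ:ℝ) := by exact_mod_cast hℓ1
  set y : ℝ := ((ℓ : ℝ) + (u ℓ : ℝ)) with hy
  have hypos : 0 < y := by positivity
  have hlow : (y / (ℓ:ℝ)) ^ (-α) ≤ L (ℓ, u ℓ) / L (ℓ, 0) := by
    have h1 : L (ℓ + u ℓ, 0) ≤ L (ℓ, u ℓ) := hdiscard ℓ (u ℓ)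
    rw [hrate] at h1
    have hcast : ((ℓ + u ℓ : ℕ) : ℝ) = y := by push_cast [hy]; ring
    rw [hcast] at h1
    rw [hrate, Real.div_rpow hypos.le hℓpos.le, Real.rpow_neg hℓpos.le]
    exact (div_le_div_iff_of_pos_right (by positivity)).mpr h1
  have hkey : max C 0 + 1 ≤ y / (ℓ:ℝ) := by
    by_contra h
    push_neg at h
    have : (max C 0 + 1) ^ (-α) ≤ (y / (ℓ:ℝ)) ^ (-α) :=
      Real.rpow_le_rpow_of_nonpos (by positivity) h.le (by linarith)
    linarith [hlow.trans_lt hlt]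
  have : max C 0 ≤ (u ℓ : ℝ) / (ℓ:ℝ) := by
    have hyx : y / (ℓ:ℝ) = 1 + (u ℓ : ℝ) / (ℓ:ℝ) := by
      field_simp [hy]; exact hy
    rw [hyx] at hkey; linarith
  exact (le_max_left C 0).trans this
end

section
/- Suppose nonincreasing functions e_A, e_B : ℕ → ℝ≥0 bound the per-component expected excess risks (e.g., e_A(m) is an upper bound on expected excess risk of algorithm A_A given m labeled examples). Let ℓ ∈ ℕ be divisible by 4 and let C ~ Binomial(ℓ, 1/2). Then E[(1/2)e_A(C) + (1/2)e_B(ℓ − C)] ≤ 2exp(−ℓ/8) + (1/2)e_A(ℓ/4) + (1/2)e_B(ℓ/4), where we use e_A, e_B ≤ 1. -/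
open Finset

lemma exp_half_le : (16:ℝ)/27 ≤ Real.exp (-(1/2)) := by
  have h1 : Real.exp (1/2) * Real.exp (1/2) = Real.exp 1 := by
    rw [← Real.exp_add]; norm_num
  have h2 : Real.exp 1 < 2.7182818286 := Real.exp_one_lt_d9
  have h3 : (0:ℝ) < Real.exp (1/2) := Real.exp_pos _
  have h4 : Real.exp (1/2) ≤ 27/16 := by nlinarith
  have h5 : Real.exp (-(1/2)) = 1 / Real.exp (1/2) := by
    rw [Real.exp_neg]; ring
  rw [h5]
  rw [le_div_iff₀ h3]
  nlinarith

lemma binom_weight_sum (n : ℕ) (x y : ℝ) (hx : 0 ≤ x) (hy : 0 ≤ y)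
    (s : Finset ℕ) (hs : s ⊆ Finset.range (n+1)) :
    ∑ k ∈ s, (n.choose k : ℝ) * (x ^ k * y ^ (n - k)) ≤ (x + y) ^ n := by
  calc ∑ k ∈ s, (n.choose k : ℝ) * (x ^ k * y ^ (n - k))
      ≤ ∑ k ∈ Finset.range (n+1), (n.choose k : ℝ) * (x ^ k * y ^ (n - k)) := by
        apply Finset.sum_le_sum_of_subset_of_nonneg hs
        intro i _ _
        positivity
    _ = (x + y) ^ n := by
        rw [add_pow]
        apply Finset.sum_congr rfl
        intro k _
        ring

/-- Core computation in the mixture upper bound (Lemma B.2): splitting on the bad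
event that one component receives fewer than `ℓ/4` of the `ℓ` samples. -/
theorem mixture_binomial_expectation_bound
    (e_A e_B : ℕ → ℝ) (hA_mono : Antitone e_A) (hB_mono : Antitone e_B)
    (hA0 : ∀ m, 0 ≤ e_A m) (hB0 : ∀ m, 0 ≤ e_B m)
    (hA1 : ∀ m, e_A m ≤ 1) (hB1 : ∀ m, e_B m ≤ 1)
    (ℓ : ℕ) (hdiv : 4 ∣ ℓ) :
    ∑ k ∈ Finset.range (ℓ + 1),
      (ℓ.choose k : ℝ) * (1 / 2) ^ ℓ * ((1 / 2) * e_A k + (1 / 2) * e_B (ℓ - k))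
    ≤ 2 * Real.exp (-(ℓ : ℝ) / 8) + (1 / 2) * e_A (ℓ / 4) + (1 / 2) * e_B (ℓ / 4) := by
  obtain ⟨m, rfl⟩ := hdiv
  have hm4 : (4 * m) / 4 = m := Nat.mul_div_cancel_left m (by norm_num)
  rw [hm4]
  set n := 4 * m with hn
  set c : ℝ := (1/2) * e_A m + (1/2) * e_B m with hc
  have hc0 : 0 ≤ c := by
    rw [hc]
    have := hA0 m; have := hB0 m; linarith
  have hp0 : ∀ k, 0 ≤ (n.choose k : ℝ) * (1/2) ^ n := by intro k; positivity
  -- termwise bound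
  have hterm : ∀ k ∈ Finset.range (n+1),
      (n.choose k : ℝ) * (1 / 2) ^ n * ((1 / 2) * e_A k + (1 / 2) * e_B (n - k))
      ≤ (n.choose k : ℝ) * (1/2) ^ n *
          (if m ≤ k ∧ k ≤ 3*m then c else 1) := by
    intro k hk
    apply mul_le_mul_of_nonneg_left _ (hp0 k)
    split_ifs with h
    · obtain ⟨h1, h2⟩ := h
      have hA := hA_mono h1
      have hB := hB_mono (show m ≤ n - k by omega)
      rw [hc]; linarith
    · have := hA1 k; have := hB1 (n - k)
      have := hA0 k; have := hB0 (n - k)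
      linarith
  have step1 := Finset.sum_le_sum hterm
  refine le_trans step1 ?_
  -- split sum on the condition
  rw [← Finset.sum_filter_add_sum_filter_not (Finset.range (n+1))
    (fun k => m ≤ k ∧ k ≤ 3*m)]
  have hgood : ∑ k ∈ (Finset.range (n+1)).filter (fun k => m ≤ k ∧ k ≤ 3*m),
      (n.choose k : ℝ) * (1/2) ^ n * (if m ≤ k ∧ k ≤ 3*m then c else 1) ≤ c := by
    calc ∑ k ∈ (Finset.range (n+1)).filter (fun k => m ≤ k ∧ k ≤ 3*m),
        (n.choose k : ℝ) * (1/2) ^ n * (if m ≤ k ∧ k ≤ 3*m then c else 1)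
        = ∑ k ∈ (Finset.range (n+1)).filter (fun k => m ≤ k ∧ k ≤ 3*m),
            ((n.choose k : ℝ) * ((1/2:ℝ) ^ k * (1/2:ℝ) ^ (n - k))) * c := by
          apply Finset.sum_congr rfl
          intro k hk
          simp only [Finset.mem_filter] at hk
          rw [if_pos hk.2, ← pow_add]
          have : k + (n - k) = n := by omega
          rw [this]
      _ = (∑ k ∈ (Finset.range (n+1)).filter (fun k => m ≤ k ∧ k ≤ 3*m),
            (n.choose k : ℝ) * ((1/2:ℝ) ^ k * (1/2:ℝ) ^ (n - k))) * c := by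
          rw [Finset.sum_mul]
      _ ≤ ((1/2 + 1/2:ℝ) ^ n) * c := by
          apply mul_le_mul_of_nonneg_right _ hc0
          exact binom_weight_sum n _ _ (by norm_num) (by norm_num) _
            (Finset.filter_subset _ _)
      _ = c := by norm_num
  have hbadbound : ∀ (x y : ℝ), 0 ≤ x → 0 ≤ y →
      (∀ k ∈ (Finset.range (n+1)).filter (fun k => ¬(m ≤ k ∧ k ≤ 3*m)),
        True) → True := fun _ _ _ _ _ => trivial
  -- bad part
  have hbad : ∑ k ∈ (Finset.range (n+1)).filter (fun k => ¬(m ≤ k ∧ k ≤ 3*m)),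
      (n.choose k : ℝ) * (1/2) ^ n * (if m ≤ k ∧ k ≤ 3*m then c else 1)
      ≤ 2 * Real.exp (-(n : ℝ) / 8) := by
    have heq : ∀ k ∈ (Finset.range (n+1)).filter (fun k => ¬(m ≤ k ∧ k ≤ 3*m)),
        (n.choose k : ℝ) * (1/2) ^ n * (if m ≤ k ∧ k ≤ 3*m then c else 1)
        = (n.choose k : ℝ) * (1/2) ^ n := by
      intro k hk
      simp only [Finset.mem_filter] at hk
      rw [if_neg hk.2, mul_one]
    rw [Finset.sum_congr rfl heq]
    -- split bad into lower and upper tail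
    have hsplit : (Finset.range (n+1)).filter (fun k => ¬(m ≤ k ∧ k ≤ 3*m))
        = (Finset.range (n+1)).filter (fun k => k < m) ∪
          (Finset.range (n+1)).filter (fun k => 3*m < k) := by
      ext k
      simp only [Finset.mem_filter, Finset.mem_union, Finset.mem_range]
      omega
    have hdisj : Disjoint ((Finset.range (n+1)).filter (fun k => k < m))
        ((Finset.range (n+1)).filter (fun k => 3*m < k)) := by
      rw [Finset.disjoint_filter]
      intro k _ hk
      omega
    rw [hsplit, Finset.sum_union hdisj]
    have hlow : ∑ k ∈ (Finset.range (n+1)).filter (fun k => k < m),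
        (n.choose k : ℝ) * (1/2) ^ n ≤ ((16:ℝ)/27) ^ m := by
      calc ∑ k ∈ (Finset.range (n+1)).filter (fun k => k < m),
            (n.choose k : ℝ) * (1/2) ^ n
          ≤ ∑ k ∈ (Finset.range (n+1)).filter (fun k => k < m),
            (3:ℝ)^m * ((n.choose k : ℝ) * ((1/6:ℝ)^k * (1/2:ℝ)^(n-k))) := by
            apply Finset.sum_le_sum
            intro k hk
            simp only [Finset.mem_filter, Finset.mem_range] at hk
            have hkm : k < m := hk.2
            have h16 : ((1/6:ℝ)^k * (1/2:ℝ)^(n-k)) = (1/3:ℝ)^k * (1/2:ℝ)^n := by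
              have : (1/6:ℝ)^k = (1/3:ℝ)^k * (1/2:ℝ)^k := by
                rw [← mul_pow]; norm_num
              rw [this, mul_assoc, ← pow_add]
              congr 2
              omega
            rw [h16]
            have h3 : (1:ℝ) ≤ (3:ℝ)^m * (1/3:ℝ)^k := by
              have hsplit3 : (3:ℝ)^m = 3^(m-k) * 3^k := by
                rw [← pow_add]; congr 1; omega
              rw [hsplit3, mul_assoc]
              have : (3:ℝ)^k * (1/3:ℝ)^k = 1 := by
                rw [← mul_pow]; norm_num
              rw [this, mul_one]
              exact one_le_pow₀ (by norm_num)
            have h4 : (3:ℝ)^m * ((n.choose k : ℝ) * ((1/3:ℝ)^k * (1/2:ℝ)^n))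
                = ((n.choose k : ℝ) * (1/2:ℝ)^n) * ((3:ℝ)^m * (1/3:ℝ)^k) := by ring
            rw [h4]
            exact le_mul_of_one_le_right (hp0 k) h3
        _ = (3:ℝ)^m * ∑ k ∈ (Finset.range (n+1)).filter (fun k => k < m),
              ((n.choose k : ℝ) * ((1/6:ℝ)^k * (1/2:ℝ)^(n-k))) := by
            rw [Finset.mul_sum]
        _ ≤ (3:ℝ)^m * ((1/6 + 1/2:ℝ))^n := by
            apply mul_le_mul_of_nonneg_left _ (by positivity)
            exact binom_weight_sum n _ _ (by norm_num) (by norm_num) _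
              (Finset.filter_subset _ _)
        _ = ((16:ℝ)/27) ^ m := by
            rw [hn, pow_mul]
            rw [← mul_pow]
            norm_num
    have hhigh : ∑ k ∈ (Finset.range (n+1)).filter (fun k => 3*m < k),
        (n.choose k : ℝ) * (1/2) ^ n ≤ ((16:ℝ)/27) ^ m := by
      calc ∑ k ∈ (Finset.range (n+1)).filter (fun k => 3*m < k),
            (n.choose k : ℝ) * (1/2) ^ n
          ≤ ∑ k ∈ (Finset.range (n+1)).filter (fun k => 3*m < k),
            (1/3:ℝ)^(3*m) * ((n.choose k : ℝ) * ((3/2:ℝ)^k * (1/2:ℝ)^(n-k))) := by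
            apply Finset.sum_le_sum
            intro k hk
            simp only [Finset.mem_filter, Finset.mem_range] at hk
            have hkm : 3*m < k := hk.2
            have h32 : ((3/2:ℝ)^k * (1/2:ℝ)^(n-k)) = (3:ℝ)^k * (1/2:ℝ)^n := by
              have : (3/2:ℝ)^k = (3:ℝ)^k * (1/2:ℝ)^k := by
                rw [← mul_pow]; norm_num
              rw [this, mul_assoc, ← pow_add]
              congr 2
              omega
            rw [h32]
            have h3 : (1:ℝ) ≤ (1/3:ℝ)^(3*m) * (3:ℝ)^k := by
              have hsplit3 : (3:ℝ)^k = 3^(k - 3*m) * 3^(3*m) := by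
                rw [← pow_add]; congr 1; omega
              rw [hsplit3]
              have h13 : (1/3:ℝ)^(3*m) * ((3:ℝ)^(k-3*m) * (3:ℝ)^(3*m))
                  = (3:ℝ)^(k-3*m) * ((1/3:ℝ)^(3*m) * (3:ℝ)^(3*m)) := by ring
              rw [h13]
              have : (1/3:ℝ)^(3*m) * (3:ℝ)^(3*m) = 1 := by
                rw [← mul_pow]; norm_num
              rw [this, mul_one]
              exact one_le_pow₀ (by norm_num)
            have h4 : (1/3:ℝ)^(3*m) * ((n.choose k : ℝ) * ((3:ℝ)^k * (1/2:ℝ)^n))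
                = ((n.choose k : ℝ) * (1/2:ℝ)^n) * ((1/3:ℝ)^(3*m) * (3:ℝ)^k) := by ring
            rw [h4]
            exact le_mul_of_one_le_right (hp0 k) h3
        _ = (1/3:ℝ)^(3*m) * ∑ k ∈ (Finset.range (n+1)).filter (fun k => 3*m < k),
              ((n.choose k : ℝ) * ((3/2:ℝ)^k * (1/2:ℝ)^(n-k))) := by
            rw [Finset.mul_sum]
        _ ≤ (1/3:ℝ)^(3*m) * ((3/2 + 1/2:ℝ))^n := by
            apply mul_le_mul_of_nonneg_left _ (by positivity)
            exact binom_weight_sum n _ _ (by norm_num) (by norm_num) _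
              (Finset.filter_subset _ _)
        _ = ((16:ℝ)/27) ^ m := by
            rw [hn, pow_mul, pow_mul, ← mul_pow]
            norm_num
    have hexp : ((16:ℝ)/27) ^ m ≤ Real.exp (-(n : ℝ) / 8) := by
      have h1 : Real.exp (-(n : ℝ) / 8) = Real.exp (-(1/2)) ^ m := by
        rw [← Real.exp_nat_mul]
        congr 1
        rw [hn]
        push_cast
        ring
      rw [h1]
      exact pow_le_pow_left₀ (by norm_num) exp_half_le m
    linarith
  calc _ ≤ c + 2 * Real.exp (-(n : ℝ) / 8) := by linarith
    _ = 2 * Real.exp (-(n : ℝ) / 8) + (1/2) * e_A m + (1/2) * e_B m := by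
        rw [hc]; ring
end
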